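/- arXiv:1501.05806 — 3 statements merged into one kernel-verified Lean document; each statement's English description precedes it below -/
import Mathlib

section
/- Let n ≥ 2 and let S be a subset of M_n(ℂ) whose generated unital subalgebra is all of M_n(ℂ). If l(S) = 2n − 2 and L_2^0(S) contains an invertible matrix A that is derogatory (the degree of the minimal polynomial of A is at most n − 1), then l(S) = l_0(S). -/
/-- `L_k(S)`: the ℂ-linear span of all words in `S` of length at most `k`
(including the empty word, the identity matrix). -/
noncomputable def wordSpan (n k : ℕ) (S : Set (Matrix (Fin n) (Fin n) ℂ)) :
    Submodule ℂ (Matrix (Fin n) (Fin n) ℂ) :=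
  Submodule.span ℂ {M | ∃ w : List (Matrix (Fin n) (Fin n) ℂ),
    w.length ≤ k ∧ (∀ x ∈ w, x ∈ S) ∧ M = w.prod}

/-- `L_k^0(S)`: the ℂ-linear span of all words in `S` of length between `1` and `k`. -/
noncomputable def wordSpan0 (n k : ℕ) (S : Set (Matrix (Fin n) (Fin n) ℂ)) :
    Submodule ℂ (Matrix (Fin n) (Fin n) ℂ) :=
  Submodule.span ℂ {M | ∃ w : List (Matrix (Fin n) (Fin n) ℂ),
    1 ≤ w.length ∧ w.length ≤ k ∧ (∀ x ∈ w, x ∈ S) ∧ M = w.prod}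

lemma wordSpan0_mono (n : ℕ) (S : Set (Matrix (Fin n) (Fin n) ℂ)) {k m : ℕ} (h : k ≤ m) :
    wordSpan0 n k S ≤ wordSpan0 n m S := by
  apply Submodule.span_mono
  rintro M ⟨w, h1, h2, h3, h4⟩
  exact ⟨w, h1, h2.trans h, h3, h4⟩

lemma wordSpan0_le_wordSpan (n k : ℕ) (S : Set (Matrix (Fin n) (Fin n) ℂ)) :
    wordSpan0 n k S ≤ wordSpan n k S := by
  apply Submodule.span_mono
  rintro M ⟨w, _, h2, h3, h4⟩
  exact ⟨w, h2, h3, h4⟩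

lemma mul_mem_wordSpan0 {n k m : ℕ} {S : Set (Matrix (Fin n) (Fin n) ℂ)}
    {a b : Matrix (Fin n) (Fin n) ℂ}
    (ha : a ∈ wordSpan0 n k S) (hb : b ∈ wordSpan0 n m S) :
    a * b ∈ wordSpan0 n (k + m) S := by
  have h := Submodule.mul_mem_mul ha hb
  rw [wordSpan0, wordSpan0, Submodule.span_mul_span] at h
  refine Submodule.span_le.mpr ?_ h
  rintro x ⟨u, ⟨wu, hu1, hu2, hu3, rfl⟩, v, ⟨wv, hv1, hv2, hv3, rfl⟩, rfl⟩
  refine Submodule.subset_span ⟨wu ++ wv, ?_, ?_, ?_, ?_⟩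
  · simp only [List.length_append]; omega
  · simpa using Nat.add_le_add hu2 hv2
  · intro x hx
    rcases List.mem_append.mp hx with h | h
    · exact hu3 x h
    · exact hv3 x h
  · simp

lemma pow_mem_wordSpan0 {n : ℕ} {S : Set (Matrix (Fin n) (Fin n) ℂ)}
    {A : Matrix (Fin n) (Fin n) ℂ} (hA : A ∈ wordSpan0 n 2 S) (j : ℕ) :
    A ^ (j + 1) ∈ wordSpan0 n (2 * (j + 1)) S := by
  induction j with
  | zero => simpa using hA
  | succ j ih =>
    have h2 : 2 * (j + 1 + 1) = 2 * (j + 1) + 2 := by ring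
    rw [h2, pow_succ]
    exact mul_mem_wordSpan0 ih hA

/-- If `S` generates `M_n(ℂ)`, `l(S) = 2n - 2` and `L_2^0(S)` contains an invertible
derogatory matrix, then `l(S) = l_0(S)`. -/
theorem stmt_2 (n : ℕ) (hn : 2 ≤ n) (S : Set (Matrix (Fin n) (Fin n) ℂ))
    (hgen : Algebra.adjoin ℂ S = ⊤)
    (hlen : sInf {k | wordSpan n k S = ⊤} = 2 * n - 2)
    (hinv : ∃ A ∈ wordSpan0 n 2 S, IsUnit A ∧ (minpoly ℂ A).natDegree ≤ n - 1) :
    sInf {k | wordSpan n k S = ⊤} = sInf {k | wordSpan0 n k S = ⊤} := by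
  obtain ⟨A, hA, hAu, hAd⟩ := hinv
  have hpos : 0 < 2 * n - 2 := by omega
  -- the wordSpan set is nonempty
  have hne : {k | wordSpan n k S = ⊤}.Nonempty := by
    by_contra h
    rw [Set.not_nonempty_iff_eq_empty] at h
    rw [h, Nat.sInf_empty] at hlen
    omega
  have hmem : wordSpan n (2 * n - 2) S = ⊤ := by
    have := Nat.sInf_mem hne
    rwa [hlen] at this
  -- identity is in wordSpan0 n (2n-2) S
  have hcoeff : (minpoly ℂ A).coeff 0 ≠ 0 := by
    intro h0
    have hX : Polynomial.X ∣ minpoly ℂ A := Polynomial.X_dvd_iff.mpr h0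
    have hdvd : minpoly ℂ A ∣ A.charpoly := minpoly.dvd ℂ A (Matrix.aeval_self_charpoly A)
    have hXc : Polynomial.X ∣ A.charpoly := hX.trans hdvd
    have hc0 : A.charpoly.coeff 0 = 0 := Polynomial.X_dvd_iff.mp hXc
    have hdet : A.det = 0 := by
      rw [Matrix.det_eq_sign_charpoly_coeff, hc0, mul_zero]
    have := A.isUnit_iff_isUnit_det.mp hAu
    rw [hdet] at this
    exact not_isUnit_zero this
  have hint : IsIntegral ℂ A := Algebra.IsIntegral.isIntegral A
  set p := minpoly ℂ A with hp
  set d := p.natDegree with hd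
  have haev : Polynomial.aeval A p = 0 := minpoly.aeval ℂ A
  have hsum : (0 : Matrix (Fin n) (Fin n) ℂ) =
      ∑ i ∈ Finset.range (d + 1), p.coeff i • A ^ i := by
    rw [← Polynomial.aeval_eq_sum_range (p := p) A, haev]
  rw [Finset.sum_range_succ'] at hsum
  have hone : (1 : Matrix (Fin n) (Fin n) ℂ) =
      (-(p.coeff 0)⁻¹) • ∑ i ∈ Finset.range d, p.coeff (i + 1) • A ^ (i + 1) := by
    have hneg : p.coeff 0 • (1 : Matrix (Fin n) (Fin n) ℂ) =
        -∑ i ∈ Finset.range d, p.coeff (i + 1) • A ^ (i + 1) := by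
      have h' := hsum.symm
      simp only [pow_zero] at h'
      exact eq_neg_of_add_eq_zero_right h'
    calc (1 : Matrix (Fin n) (Fin n) ℂ)
        = (p.coeff 0)⁻¹ • (p.coeff 0 • (1 : Matrix (Fin n) (Fin n) ℂ)) := by
          rw [smul_smul, inv_mul_cancel₀ hcoeff, one_smul]
      _ = (-(p.coeff 0)⁻¹) • ∑ i ∈ Finset.range d, p.coeff (i + 1) • A ^ (i + 1) := by
          rw [hneg, smul_neg, ← neg_smul]
  have hone_mem : (1 : Matrix (Fin n) (Fin n) ℂ) ∈ wordSpan0 n (2 * n - 2) S := by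
    rw [hone]
    refine Submodule.smul_mem _ _ (Submodule.sum_mem _ ?_)
    intro i hi
    refine Submodule.smul_mem _ _ ?_
    have hmem' := pow_mem_wordSpan0 hA i
    refine wordSpan0_mono n S ?_ hmem'
    have : i + 1 ≤ d := Finset.mem_range.mp hi
    omega
  -- wordSpan0 at 2n-2 is top
  have htop0 : wordSpan0 n (2 * n - 2) S = ⊤ := by
    rw [eq_top_iff, ← hmem]
    apply Submodule.span_le.mpr
    rintro M ⟨w, hw1, hw2, rfl⟩
    rcases Nat.eq_zero_or_pos w.length with h | h
    · rw [List.length_eq_zero_iff.mp h, List.prod_nil]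
      exact hone_mem
    · exact Submodule.subset_span ⟨w, h, hw1, hw2, rfl⟩
  -- conclude
  have hne0 : {k | wordSpan0 n k S = ⊤}.Nonempty := ⟨2 * n - 2, htop0⟩
  have h1 : sInf {k | wordSpan0 n k S = ⊤} ≤ 2 * n - 2 := Nat.sInf_le htop0
  have h2 : sInf {k | wordSpan n k S = ⊤} ≤ sInf {k | wordSpan0 n k S = ⊤} := by
    apply Nat.sInf_le
    exact top_le_iff.mp (le_trans (le_of_eq (Nat.sInf_mem hne0).symm)
      (wordSpan0_le_wordSpan n _ S))
  omega
end

section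
/- Let n ≥ 2 and i be positive integers with i < n and gcd(n, i) = 1. Define V(j) ⊆ M_n(ℂ) as the subspace of matrices supported on the j-diagonal (A ∈ V(j) iff A_{a,b} = 0 whenever b − a ≠ j), and define W(n,i) = V(n − 2i) + V(−2i) if 2i < n, W(n,i) = V(n − 2i) + V(2n − 2i) if 2i > n, and W(n,i) = V(0) if n = 2 and i = 1. Then the ℂ-linear span of all products of exactly n − 2 factors, each factor from {J_n^i, (J_nᵀ)^{n−i}} (with the empty product interpreted as the identity matrix when n = 2), is a proper subspace of W(n,i). -/
open Matrix

/-- The `n × n` nilpotent Jordan block over `ℂ`. -/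
def jordan (n : ℕ) : Matrix (Fin n) (Fin n) ℂ :=
  Matrix.of fun a b => if (a : ℕ) + 1 = (b : ℕ) then 1 else 0

/-- `V(j)`: the subspace of `M_n(ℂ)` of matrices supported on the `j`-diagonal. -/
noncomputable def vdiag (n : ℕ) (j : ℤ) : Submodule ℂ (Matrix (Fin n) (Fin n) ℂ) where
  carrier := {A | ∀ a b : Fin n, (b : ℤ) - (a : ℤ) ≠ j → A a b = 0}
  add_mem' := fun {A B} hA hB a b h => by
    simp [Matrix.add_apply, hA a b h, hB a b h]
  zero_mem' := fun a b _ => rfl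
  smul_mem' := fun c {A} hA a b h => by
    simp [Matrix.smul_apply, hA a b h]

lemma sum_ite_fin {n : ℕ} (f : Fin n → ℂ) (m : ℕ) :
    (∑ j : Fin n, if m = (j:ℕ) then f j else 0) = if h : m < n then f ⟨m, h⟩ else 0 := by
  split_ifs with h
  · rw [Finset.sum_eq_single (⟨m, h⟩ : Fin n)]
    · simp
    · intro j _ hj
      rw [if_neg]
      intro he
      exact hj (by ext; simp only [Fin.val_mk]; omega)
    · simp
  · apply Finset.sum_eq_zero
    intro j _
    rw [if_neg]
    have := j.isLt
    omega

lemma sum_ite_fin' {n : ℕ} (f : Fin n → ℂ) (k m : ℕ) :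
    (∑ j : Fin n, if (j:ℕ) + k = m then f j else 0)
      = if h : k ≤ m ∧ m - k < n then f ⟨m - k, h.2⟩ else 0 := by
  split_ifs with h
  · rw [Finset.sum_eq_single (⟨m - k, h.2⟩ : Fin n)]
    · rw [if_pos (by simp only [Fin.val_mk]; omega)]
    · intro j _ hj
      rw [if_neg]
      intro he
      exact hj (by ext; simp only [Fin.val_mk]; omega)
    · simp
  · apply Finset.sum_eq_zero
    intro j _
    rw [if_neg]
    have := j.isLt
    omega

lemma jordan_pow_apply {n : ℕ} (k : ℕ) (a b : Fin n) :
    (jordan n ^ k) a b = if (a:ℕ) + k = (b:ℕ) then 1 else 0 := by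
  induction k generalizing b with
  | zero => simp [one_apply, Fin.ext_iff]
  | succ k ih =>
    rw [pow_succ, mul_apply]
    have hterm : ∀ c : Fin n, (jordan n ^ k) a c * jordan n c b
        = if (a:ℕ)+k = (c:ℕ) then (if (c:ℕ)+1 = (b:ℕ) then (1:ℂ) else 0) else 0 := by
      intro c
      rw [ih]
      by_cases h : (a:ℕ)+k = (c:ℕ) <;> simp [h, jordan]
    simp_rw [hterm, sum_ite_fin]
    have hb := b.isLt
    split_ifs <;> first | rfl | omega

lemma jordanT_pow_apply {n : ℕ} (k : ℕ) (a b : Fin n) :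
    ((jordan n)ᵀ ^ k) a b = if (b:ℕ) + k = (a:ℕ) then 1 else 0 := by
  rw [← transpose_pow, transpose_apply, jordan_pow_apply]

lemma prod_pair {n i : ℕ} (hi : 0 < i) (hin : i < n) :
    ∀ (w : List (Matrix (Fin n) (Fin n) ℂ)),
    (∀ x ∈ w, x ∈ ({jordan n ^ i, (jordan n)ᵀ ^ (n - i)} :
        Set (Matrix (Fin n) (Fin n) ℂ))) →
    ∀ (p c : ℕ) (hp : p + 1 < n) (hc : c + 1 < n),
    (∀ t, 1 ≤ t → t ≤ w.length → ¬ (n ∣ p + 1 + t * i)) →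
    w.prod ⟨p, by omega⟩ ⟨c, by omega⟩ = w.prod ⟨p+1, hp⟩ ⟨c+1, hc⟩ := by
  intro w
  induction w with
  | nil =>
    intro _ p c hp hc _
    simp only [List.prod_nil, one_apply, Fin.mk.injEq]
    by_cases h : p = c
    · rw [if_pos h, if_pos (by omega)]
    · rw [if_neg h, if_neg (by omega)]
  | cons X w ih =>
    intro hw p c hp hc hdvd
    have hwtail : ∀ x ∈ w, x ∈ ({jordan n ^ i, (jordan n)ᵀ ^ (n - i)} :
        Set (Matrix (Fin n) (Fin n) ℂ)) := fun x hx => hw x (List.mem_cons_of_mem _ hx)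
    rw [List.prod_cons, mul_apply, mul_apply]
    rcases hw X List.mem_cons_self with hX | hX
    · -- X = jordan n ^ i
      subst hX
      have h1 : ∀ (q : ℕ) (hq : q < n) (d : Fin n),
          (∑ j, (jordan n ^ i) ⟨q, hq⟩ j * w.prod j d)
            = if h : q + i < n then w.prod ⟨q + i, h⟩ d else 0 := by
        intro q hq d
        have : ∀ j : Fin n, (jordan n ^ i) ⟨q, hq⟩ j * w.prod j d
            = if q + i = (j:ℕ) then w.prod j d else 0 := by
          intro j
          rw [jordan_pow_apply]
          by_cases h : q + i = (j:ℕ) <;> simp [h]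
        simp_rw [this, sum_ite_fin]
      rw [h1, h1]
      rcases lt_trichotomy (p + 1 + i) n with h2 | h2 | h2
      · rw [dif_pos (by omega : p + i < n), dif_pos (by omega : p + 1 + i < n)]
        have := ih hwtail (p + i) c (by omega) hc (fun t ht1 ht2 => by
          intro hd
          exact hdvd (t+1) (by omega) (by simp [List.length_cons]; omega)
            (by have he : p + 1 + (t+1) * i = p + i + 1 + t * i := by ring
                rw [he]; exact hd))
        convert this using 3 <;> omega
      · exact absurd (⟨1, by omega⟩ : n ∣ p + 1 + 1 * i)
          (hdvd 1 le_rfl (by simp [List.length_cons]))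
      · rw [dif_neg (by omega), dif_neg (by omega)]
    · -- X = (jordan n)ᵀ ^ (n - i)
      subst hX
      have h1 : ∀ (q : ℕ) (hq : q < n) (d : Fin n),
          (∑ j, ((jordan n)ᵀ ^ (n - i)) ⟨q, hq⟩ j * w.prod j d)
            = if h : (n - i) ≤ q ∧ q - (n - i) < n then w.prod ⟨q - (n-i), h.2⟩ d else 0 := by
        intro q hq d
        have : ∀ j : Fin n, ((jordan n)ᵀ ^ (n-i)) ⟨q, hq⟩ j * w.prod j d
            = if (j:ℕ) + (n - i) = q then w.prod j d else 0 := by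
          intro j
          rw [jordanT_pow_apply]
          by_cases h : (j:ℕ) + (n-i) = q <;> simp [h]
        simp_rw [this, sum_ite_fin']
      rw [h1, h1]
      rcases lt_trichotomy (n - i) (p + 1) with h2 | h2 | h2
      · rw [dif_pos (by omega : (n-i) ≤ p ∧ p - (n-i) < n),
            dif_pos (by omega : (n-i) ≤ p + 1 ∧ p + 1 - (n-i) < n)]
        have := ih hwtail (p - (n - i)) c (by omega) hc (fun t ht1 ht2 => by
          intro hd
          exact hdvd (t+1) (by omega) (by simp [List.length_cons]; omega)
            (by have he : p + 1 + (t+1) * i = (p - (n - i) + 1 + t * i) + n := by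
                  have h3 : (t+1) * i = t * i + i := by ring
                  omega
                rw [he]; exact dvd_add hd dvd_rfl))
        convert this using 3 <;> omega
      · exact absurd (⟨1, by omega⟩ : n ∣ p + 1 + 1 * i)
          (hdvd 1 le_rfl (by simp [List.length_cons]))
      · rw [dif_neg (by omega), dif_neg (by omega)]

lemma prod_congr_zmod {n i : ℕ} (hin : i < n) :
    ∀ (w : List (Matrix (Fin n) (Fin n) ℂ)),
    (∀ x ∈ w, x ∈ ({jordan n ^ i, (jordan n)ᵀ ^ (n - i)} :
        Set (Matrix (Fin n) (Fin n) ℂ))) →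
    ∀ a b : Fin n, w.prod a b ≠ 0 →
      ((b:ℕ) : ZMod n) = ((a:ℕ) : ZMod n) + (w.length : ZMod n) * (i : ZMod n) := by
  intro w
  induction w with
  | nil =>
    intro _ a b hne
    rw [List.prod_nil] at hne
    have : a = b := by
      by_contra h
      exact hne (one_apply_ne h)
    simp [this]
  | cons X w ih =>
    intro hw a b hne
    rw [List.prod_cons, mul_apply] at hne
    obtain ⟨c, _, hc⟩ := Finset.exists_ne_zero_of_sum_ne_zero hne
    have hX : X a c ≠ 0 := fun h => hc (by simp [h])
    have hprod : w.prod c b ≠ 0 := fun h => hc (by simp [h])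
    have hstep : ((c:ℕ) : ZMod n) = ((a:ℕ) : ZMod n) + (i : ZMod n) := by
      rcases hw X List.mem_cons_self with h | h
      · subst h
        rw [jordan_pow_apply] at hX
        by_cases he : (a:ℕ) + i = (c:ℕ)
        · rw [← he]; push_cast; ring
        · exact absurd (if_neg he) hX
      · subst h
        rw [jordanT_pow_apply] at hX
        by_cases he : (c:ℕ) + (n - i) = (a:ℕ)
        · have : ((c:ℕ) : ZMod n) + ((n - i : ℕ) : ZMod n) = ((a:ℕ) : ZMod n) := by
            rw [← Nat.cast_add, he]
          rw [Nat.cast_sub hin.le] at this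
          have hn0 : ((n:ℕ) : ZMod n) = 0 := ZMod.natCast_self n
          rw [hn0] at this
          linear_combination this
        · exact absurd (if_neg he) hX
    have := ih (fun x hx => hw x (List.mem_cons_of_mem _ hx)) c b hprod
    rw [this, hstep, List.length_cons]
    push_cast
    ring

lemma dvd_of_prod_entry {n i : ℕ} (hn : 2 ≤ n) (hin : i < n)
    (w : List (Matrix (Fin n) (Fin n) ℂ)) (hlen : w.length = n - 2)
    (hw : ∀ x ∈ w, x ∈ ({jordan n ^ i, (jordan n)ᵀ ^ (n - i)} :
        Set (Matrix (Fin n) (Fin n) ℂ)))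
    (a b : Fin n) (hne : w.prod a b ≠ 0) :
    (n : ℤ) ∣ ((b:ℕ):ℤ) - ((a:ℕ):ℤ) + 2 * i := by
  have h := prod_congr_zmod hin w hw a b hne
  rw [hlen] at h
  have h2 : ((((b:ℕ):ℤ) - ((a:ℕ):ℤ) + 2 * i : ℤ) : ZMod n) = 0 := by
    push_cast
    rw [h]
    have : ((n - 2 : ℕ) : ZMod n) = -2 := by
      have := Nat.cast_sub (by omega : 2 ≤ n) (R := ZMod n)
      rw [this, ZMod.natCast_self]
      ring
    rw [this]
    ring
  exact (ZMod.intCast_zmod_eq_zero_iff_dvd _ n).1 h2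

lemma interval_dvd_case (N s : ℤ) (hN : 0 < N) (hd : N ∣ s) (h1 : -N < s) (h2 : s < 2 * N) :
    s = 0 ∨ s = N := by
  obtain ⟨k, hk⟩ := hd
  have hk0 : 0 ≤ k := by nlinarith
  have hk1 : k ≤ 1 := by nlinarith
  interval_cases k <;> omega

lemma mem_vdiag_iff {n : ℕ} (j : ℤ) (A : Matrix (Fin n) (Fin n) ℂ) :
    A ∈ vdiag n j ↔ ∀ a b : Fin n, ((b:ℕ):ℤ) - ((a:ℕ):ℤ) ≠ j → A a b = 0 := Iff.rfl

lemma mem_sup_vdiag {n : ℕ} (d1 d2 : ℤ) (hne : d1 ≠ d2) (A : Matrix (Fin n) (Fin n) ℂ)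
    (hA : ∀ a b : Fin n, A a b ≠ 0 → (((b:ℕ):ℤ) - ((a:ℕ):ℤ) = d1 ∨ ((b:ℕ):ℤ) - ((a:ℕ):ℤ) = d2)) :
    A ∈ vdiag n d1 ⊔ vdiag n d2 := by
  rw [Submodule.mem_sup]
  refine ⟨Matrix.of fun a b => if ((b:ℕ):ℤ) - ((a:ℕ):ℤ) = d1 then A a b else 0, ?_,
         Matrix.of fun a b => if ((b:ℕ):ℤ) - ((a:ℕ):ℤ) = d2 then A a b else 0, ?_, ?_⟩
  · rw [mem_vdiag_iff]
    intro a b h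
    exact if_neg h
  · rw [mem_vdiag_iff]
    intro a b h
    exact if_neg h
  · ext a b
    simp only [Matrix.add_apply, Matrix.of_apply]
    by_cases h1 : ((b:ℕ):ℤ) - ((a:ℕ):ℤ) = d1
    · rw [if_pos h1, if_neg (fun h2 => hne (h1.symm.trans h2))]
      ring
    · rw [if_neg h1]
      by_cases h2 : ((b:ℕ):ℤ) - ((a:ℕ):ℤ) = d2
      · rw [if_pos h2]; ring
      · rw [if_neg h2]
        by_cases h0 : A a b = 0
        · simp [h0]
        · rcases hA a b h0 with h | h
          · exact absurd h h1
          · exact absurd h h2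

lemma interval_dvd_case2 (N s : ℤ) (hN : 0 < N) (hd : N ∣ s) (h1 : 0 < s) (h2 : s < 3 * N) :
    s = N ∨ s = 2 * N := by
  obtain ⟨k, hk⟩ := hd
  have hk0 : 1 ≤ k := by nlinarith
  have hk1 : k ≤ 2 := by nlinarith
  interval_cases k <;> omega

/-- For `n ≥ 2`, `0 < i < n` with `gcd(n, i) = 1`, the span of all products of exactly
`n - 2` factors from `{J_n^i, (J_nᵀ)^{n-i}}` is a proper subspace of `W(n,i)`, where
`W(n,i) = V(n-2i) + V(-2i)` if `2i < n`, `W(n,i) = V(n-2i) + V(2n-2i)` if `2i > n`, and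
`W(n,i) = V(0)` if `n = 2`, `i = 1`. -/
theorem stmt_15 (n i : ℕ) (hn : 2 ≤ n) (hi : 0 < i) (hin : i < n)
    (hgcd : Nat.gcd n i = 1) :
    let W : Submodule ℂ (Matrix (Fin n) (Fin n) ℂ) :=
      if 2 * i < n then vdiag n ((n : ℤ) - 2 * i) ⊔ vdiag n (-(2 * i : ℤ))
      else if n < 2 * i then vdiag n ((n : ℤ) - 2 * i) ⊔ vdiag n (2 * (n : ℤ) - 2 * i)
      else vdiag n 0
    Submodule.span ℂ {M : Matrix (Fin n) (Fin n) ℂ |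
        ∃ w : List (Matrix (Fin n) (Fin n) ℂ), w.length = n - 2 ∧
          (∀ x ∈ w, x ∈ ({jordan n ^ i, (jordan n)ᵀ ^ (n - i)} :
            Set (Matrix (Fin n) (Fin n) ℂ))) ∧ M = w.prod} < W := by
  intro W
  have hWdef : W = (if 2 * i < n then vdiag n ((n : ℤ) - 2 * i) ⊔ vdiag n (-(2 * i : ℤ))
      else if n < 2 * i then vdiag n ((n : ℤ) - 2 * i) ⊔ vdiag n (2 * (n : ℤ) - 2 * i)
      else vdiag n 0) := rfl
  -- the span is contained in W
  have hle : Submodule.span ℂ {M : Matrix (Fin n) (Fin n) ℂ |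
        ∃ w : List (Matrix (Fin n) (Fin n) ℂ), w.length = n - 2 ∧
          (∀ x ∈ w, x ∈ ({jordan n ^ i, (jordan n)ᵀ ^ (n - i)} :
            Set (Matrix (Fin n) (Fin n) ℂ))) ∧ M = w.prod} ≤ W := by
    rw [Submodule.span_le]
    rintro M ⟨w, hlen, hw, rfl⟩
    have hdvd := fun a b => dvd_of_prod_entry hn hin w hlen hw a b
    rw [hWdef]
    split_ifs with h1 h2
    · apply mem_sup_vdiag _ _ (by omega)
      intro a b hne
      have hd := hdvd a b hne
      have ha := a.isLt
      have hb := b.isLt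
      rcases interval_dvd_case (n:ℤ) _ (by omega) hd (by omega) (by omega) with h | h
      · right; omega
      · left; omega
    · apply mem_sup_vdiag _ _ (by omega)
      intro a b hne
      have hd := hdvd a b hne
      have ha := a.isLt
      have hb := b.isLt
      rcases interval_dvd_case2 (n:ℤ) _ (by omega) hd (by omega) (by omega) with h | h
      · left; omega
      · right; omega
    · rw [SetLike.mem_coe, mem_vdiag_iff]
      intro a b hne
      by_contra h
      have hd := hdvd a b h
      have ha := a.isLt
      have hb := b.isLt
      rcases interval_dvd_case (n:ℤ) _ (by omega) hd (by omega) (by omega) with h' | h' <;> omega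
  -- the distinguished entries
  have hii : i - 1 < n := by omega
  have hii2 : n - i - 1 < n := by omega
  have hni : n - i < n := by omega
  set r0 : Fin n := ⟨i - 1, hii⟩ with hr0
  set c0 : Fin n := ⟨n - i - 1, hii2⟩ with hc0
  set r1 : Fin n := ⟨i, hin⟩ with hr1
  set c1 : Fin n := ⟨n - i, hni⟩ with hc1
  -- every generator has equal entries at (r0,c0) and (r1,c1)
  have hker : ∀ M ∈ {M : Matrix (Fin n) (Fin n) ℂ |
        ∃ w : List (Matrix (Fin n) (Fin n) ℂ), w.length = n - 2 ∧
          (∀ x ∈ w, x ∈ ({jordan n ^ i, (jordan n)ᵀ ^ (n - i)} :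
            Set (Matrix (Fin n) (Fin n) ℂ))) ∧ M = w.prod},
      M r0 c0 = M r1 c1 := by
    rintro M ⟨w, hlen, hw, rfl⟩
    have hdvdc : ∀ t, 1 ≤ t → t ≤ w.length → ¬ (n ∣ (i - 1) + 1 + t * i) := by
      intro t ht1 ht2 hd
      rw [hlen] at ht2
      have h3 : (t + 1) * i = t * i + i := by ring
      have he : i - 1 + 1 + t * i = (t + 1) * i := by omega
      rw [he] at hd
      have hdt : n ∣ t + 1 := (Nat.Coprime.dvd_of_dvd_mul_right hgcd hd)
      have := Nat.le_of_dvd (by omega) hdt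
      omega
    have h := prod_pair hi hin w hw (i - 1) (n - i - 1)
      (by omega) (by omega) hdvdc
    have e1 : (⟨i - 1 + 1, by omega⟩ : Fin n) = r1 := by ext; show i - 1 + 1 = i; omega
    have e2 : (⟨n - i - 1 + 1, by omega⟩ : Fin n) = c1 := by ext; show n - i - 1 + 1 = n - i; omega
    rw [e1, e2] at h
    convert h using 2
  -- the witness matrix
  set E : Matrix (Fin n) (Fin n) ℂ :=
    Matrix.of (fun a b => if a = r0 ∧ b = c0 then (1:ℂ) else 0) with hE
  have hEvd : E ∈ vdiag n ((n : ℤ) - 2 * i) := by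
    rw [mem_vdiag_iff]
    intro a b hne
    apply if_neg
    rintro ⟨rfl, rfl⟩
    apply hne
    simp only [hr0, hc0, Fin.val_mk]
    omega
  have hEW : E ∈ W := by
    rw [hWdef]
    split_ifs with h1 h2
    · exact Submodule.mem_sup_left hEvd
    · exact Submodule.mem_sup_left hEvd
    · have hzero : (n : ℤ) - 2 * i = 0 := by omega
      rwa [hzero] at hEvd
  -- the separating linear functional
  let φ : Matrix (Fin n) (Fin n) ℂ →ₗ[ℂ] ℂ :=
    { toFun := fun A => A r0 c0 - A r1 c1
      map_add' := by intro A B; simp [Matrix.add_apply]; ring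
      map_smul' := by intro c A; simp [Matrix.smul_apply]; ring }
  have hspanker : Submodule.span ℂ {M : Matrix (Fin n) (Fin n) ℂ |
        ∃ w : List (Matrix (Fin n) (Fin n) ℂ), w.length = n - 2 ∧
          (∀ x ∈ w, x ∈ ({jordan n ^ i, (jordan n)ᵀ ^ (n - i)} :
            Set (Matrix (Fin n) (Fin n) ℂ))) ∧ M = w.prod} ≤ LinearMap.ker φ := by
    rw [Submodule.span_le]
    intro M hM
    rw [SetLike.mem_coe, LinearMap.mem_ker]
    show M r0 c0 - M r1 c1 = 0
    rw [hker M hM]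
    ring
  have hφE : φ E = 1 := by
    show E r0 c0 - E r1 c1 = 1
    have h1 : E r0 c0 = 1 := if_pos ⟨rfl, rfl⟩
    have h2 : E r1 c1 = 0 := by
      apply if_neg
      rintro ⟨h, -⟩
      rw [hr1, hr0, Fin.mk.injEq] at h
      omega
    rw [h1, h2]
    ring
  apply lt_of_le_of_ne hle
  intro hEq
  have hE' : E ∈ Submodule.span ℂ {M : Matrix (Fin n) (Fin n) ℂ |
        ∃ w : List (Matrix (Fin n) (Fin n) ℂ), w.length = n - 2 ∧
          (∀ x ∈ w, x ∈ ({jordan n ^ i, (jordan n)ᵀ ^ (n - i)} :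
            Set (Matrix (Fin n) (Fin n) ℂ))) ∧ M = w.prod} := by
    rw [hEq]; exact hEW
  have := hspanker hE'
  rw [LinearMap.mem_ker, hφE] at this
  exact one_ne_zero this
end

section
/- Let n and i be positive integers with i < n and gcd(n, i) = 1. Then the ℂ-linear span of all products of at most 2n − 2 elements of {J_n^i, (J_nᵀ)^{n−i}} (including the empty product, the identity matrix) is all of M_n(ℂ). -/
open Matrix

lemma jordan_pow (n k : ℕ) (x y : Fin n) :
    (jordan n ^ k) x y = if (x : ℕ) + k = (y : ℕ) then 1 else 0 := by
  induction k generalizing x with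
  | zero => simp [Matrix.one_apply, Fin.ext_iff, eq_comm]
  | succ k ih =>
    rw [pow_succ', Matrix.mul_apply]
    by_cases hx : (x : ℕ) + 1 < n
    · rw [Finset.sum_eq_single (⟨(x:ℕ)+1, hx⟩ : Fin n)]
      · rw [ih]
        have hj : jordan n x ⟨(x:ℕ)+1, hx⟩ = 1 := by simp [jordan]
        rw [hj, one_mul]
        show (if (x:ℕ) + 1 + k = (y:ℕ) then (1:ℂ) else 0) = _
        rw [add_assoc, Nat.add_comm 1 k]
      · intro b _ hb
        have : ¬((x:ℕ) + 1 = (b:ℕ)) := fun h => hb (by simp [Fin.ext_iff, ← h])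
        simp [jordan, this]
      · simp
    · have : ∀ b : Fin n, jordan n x b = 0 := by
        intro b; simp only [jordan, Matrix.of_apply]
        rw [if_neg]; omega
      simp only [this, zero_mul, Finset.sum_const_zero]
      rw [if_neg]; omega

lemma jordanT_pow (n k : ℕ) (x y : Fin n) :
    ((jordan n)ᵀ ^ k) x y = if (y : ℕ) + k = (x : ℕ) then 1 else 0 := by
  rw [← Matrix.transpose_pow, Matrix.transpose_apply, jordan_pow]

lemma shiftA (n k : ℕ) (M : Matrix (Fin n) (Fin n) ℂ) (x y : Fin n) :
    ((jordan n ^ k) * M) x y =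
      if h : (x : ℕ) + k < n then M ⟨(x:ℕ)+k, h⟩ y else 0 := by
  rw [Matrix.mul_apply]
  split_ifs with h
  · rw [Finset.sum_eq_single (⟨(x:ℕ)+k, h⟩ : Fin n)]
    · rw [jordan_pow, if_pos rfl, one_mul]
    · intro b _ hb
      rw [jordan_pow, if_neg, zero_mul]
      intro hc; exact hb (by simp [Fin.ext_iff, ← hc])
    · simp
  · apply Finset.sum_eq_zero
    intro b _
    rw [jordan_pow, if_neg, zero_mul]
    omega
lemma shiftB (n k : ℕ) (M : Matrix (Fin n) (Fin n) ℂ) (x y : Fin n) :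
    (((jordan n)ᵀ ^ k) * M) x y =
      if k ≤ (x : ℕ) then M ⟨(x:ℕ)-k, by omega⟩ y else 0 := by
  rw [Matrix.mul_apply]
  split_ifs with h
  · rw [Finset.sum_eq_single (⟨(x:ℕ)-k, by omega⟩ : Fin n)]
    · rw [jordanT_pow, if_pos (by simp; omega), one_mul]
    · intro b _ hb
      rw [jordanT_pow, if_neg, zero_mul]
      intro hc; exact hb (by simp [Fin.ext_iff]; omega)
    · simp
  · apply Finset.sum_eq_zero
    intro b _
    rw [jordanT_pow, if_neg, zero_mul]
    omega

def wordList (n i : ℕ) : ℕ → ℕ → List (Matrix (Fin n) (Fin n) ℂ)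
  | 0, _ => []
  | k+1, a => (if a + i < n then jordan n ^ i else (jordan n)ᵀ ^ (n - i)) ::
      wordList n i k ((a + i) % n)

lemma wordList_length (n i k a : ℕ) : (wordList n i k a).length = k := by
  induction k generalizing a with
  | zero => rfl
  | succ k ih => simp [wordList, ih]

lemma wordList_mem (n i k a : ℕ) :
    ∀ x ∈ wordList n i k a, x ∈ ({jordan n ^ i, (jordan n)ᵀ ^ (n - i)} :
      Set (Matrix (Fin n) (Fin n) ℂ)) := by
  induction k generalizing a with
  | zero => simp [wordList]
  | succ k ih =>
    intro x hx
    rw [wordList, List.mem_cons] at hx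
    rcases hx with h | h
    · subst h; split_ifs <;> simp
    · exact ih _ x h

lemma prod_wordList (n i : ℕ) (hi : 0 < i) (hin : i < n) :
    ∀ (k a : ℕ), a < n → ∀ x y : Fin n,
    (wordList n i k a).prod x y =
      if (∀ t ≤ k, ((x:ℕ) + t*i)/n = (a + t*i)/n) ∧ (y:ℕ) = ((x:ℕ) + k*i) % n
      then 1 else 0 := by
  intro k
  induction k with
  | zero =>
    intro a ha x y
    simp only [wordList, List.prod_nil, Matrix.one_apply]
    congr 1
    simp only [eq_iff_iff, Fin.ext_iff]
    constructor
    · intro h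
      constructor
      · intro t ht
        have ht0 : t = 0 := Nat.le_zero.mp ht
        subst ht0
        simp only [Nat.zero_mul, Nat.add_zero]
        rw [Nat.div_eq_of_lt x.isLt, Nat.div_eq_of_lt ha]
      · simp only [Nat.zero_mul, Nat.add_zero]
        rw [Nat.mod_eq_of_lt x.isLt]; omega
    · rintro ⟨-, h⟩
      rw [Nat.zero_mul, Nat.add_zero, Nat.mod_eq_of_lt x.isLt] at h
      omega
  | succ k ih =>
    intro a ha x y
    rw [wordList, List.prod_cons]
    have hn0 : 0 < n := by omega
    by_cases hA : a + i < n
    · rw [if_pos hA, shiftA]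
      have ha' : (a + i) % n = a + i := Nat.mod_eq_of_lt hA
      by_cases hx : (x:ℕ) + i < n
      · rw [dif_pos hx, ih ((a+i) % n) (by omega) ⟨(x:ℕ)+i, hx⟩ y, ha']
        congr 1
        simp only [eq_iff_iff]
        constructor
        · rintro ⟨hc, hy⟩
          refine ⟨?_, ?_⟩
          · intro t ht
            match t with
            | 0 =>
              simp only [Nat.zero_mul, Nat.add_zero]
              rw [Nat.div_eq_of_lt x.isLt, Nat.div_eq_of_lt ha]
            | t+1 =>
              have h1 := hc t (by omega)
              have e1 : (x:ℕ) + (t+1)*i = (x:ℕ) + i + t*i := by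
                rw [Nat.succ_mul]; omega
              have e2 : a + (t+1)*i = a + i + t*i := by
                rw [Nat.succ_mul]; omega
              rw [e1, e2]; exact h1
          · have e1 : (x:ℕ) + (k+1)*i = (x:ℕ) + i + k*i := by
              rw [Nat.succ_mul]; omega
            rw [e1]; exact hy
        · rintro ⟨hc, hy⟩
          refine ⟨?_, ?_⟩
          · intro t ht
            have h1 := hc (t+1) (by omega)
            have e1 : (x:ℕ) + (t+1)*i = (x:ℕ) + i + t*i := by
              rw [Nat.succ_mul]; omega
            have e2 : a + (t+1)*i = a + i + t*i := by
              rw [Nat.succ_mul]; omega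
            rw [e1, e2] at h1; exact h1
          · have e1 : (x:ℕ) + (k+1)*i = (x:ℕ) + i + k*i := by
              rw [Nat.succ_mul]; omega
            rw [e1] at hy; exact hy
      · rw [dif_neg hx]
        refine (if_neg ?_).symm
        rintro ⟨hc, -⟩
        have h1 := hc 1 (by omega)
        rw [one_mul] at h1
        have h2 : (a + i)/n = 0 := Nat.div_eq_of_lt hA
        have h3 : 1 ≤ ((x:ℕ) + i)/n := (Nat.one_le_div_iff hn0).mpr (by omega)
        rw [h1, h2] at h3
        exact absurd h3 (by norm_num)
    · rw [if_neg hA, shiftB]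
      have ha' : (a + i) % n = a + i - n := by
        rw [Nat.mod_eq_sub_mod (by omega), Nat.mod_eq_of_lt (by omega)]
      by_cases hx : n - i ≤ (x:ℕ)
      · rw [if_pos hx, ih ((a+i) % n) (by omega) ⟨(x:ℕ)-(n-i), by omega⟩ y, ha']
        have hxe : ((⟨(x:ℕ)-(n-i), by omega⟩ : Fin n) : ℕ) = (x:ℕ) + i - n := by
          simp; omega
        rw [hxe]
        congr 1
        simp only [eq_iff_iff]
        have e1 : ∀ t : ℕ, (x:ℕ) + (t+1)*i = ((x:ℕ) + i - n + t*i) + n := by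
          intro t; rw [Nat.succ_mul]; omega
        have e2 : ∀ t : ℕ, a + (t+1)*i = (a + i - n + t*i) + n := by
          intro t; rw [Nat.succ_mul]; omega
        constructor
        · rintro ⟨hc, hy⟩
          refine ⟨?_, ?_⟩
          · intro t ht
            match t with
            | 0 =>
              simp only [Nat.zero_mul, Nat.add_zero]
              rw [Nat.div_eq_of_lt x.isLt, Nat.div_eq_of_lt ha]
            | t+1 =>
              have h1 := hc t (by omega)
              rw [e1, e2, Nat.add_div_right _ hn0, Nat.add_div_right _ hn0, h1]
          · rw [e1, Nat.add_mod_right]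
            exact hy
        · rintro ⟨hc, hy⟩
          refine ⟨?_, ?_⟩
          · intro t ht
            have h1 := hc (t+1) (by omega)
            rw [e1, e2, Nat.add_div_right _ hn0, Nat.add_div_right _ hn0] at h1
            exact Nat.add_right_cancel h1
          · rw [e1, Nat.add_mod_right] at hy
            exact hy
      · rw [if_neg hx]
        refine (if_neg ?_).symm
        rintro ⟨hc, -⟩
        have h1 := hc 1 (by omega)
        rw [one_mul] at h1
        have h2 : ((x:ℕ) + i)/n = 0 := Nat.div_eq_of_lt (by omega)
        have h3 : 1 ≤ (a + i)/n := (Nat.one_le_div_iff hn0).mpr (by omega)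
        rw [← h1, h2] at h3
        exact absurd h3 (by norm_num)

lemma exists_mul_mod (n i : ℕ) (hn : 0 < n) (hgcd : Nat.gcd n i = 1) (c : ℕ) :
    ∃ s, s < n ∧ (s * i) % n = c % n := by
  haveI : NeZero n := ⟨hn.ne'⟩
  have hco : Nat.Coprime i n := Nat.coprime_comm.mp hgcd
  set u := ZMod.unitOfCoprime i hco with hu
  refine ⟨((c : ZMod n) * ↑u⁻¹).val, ZMod.val_lt _, ?_⟩
  have hcast : ((((c : ZMod n) * ↑u⁻¹).val * i : ℕ) : ZMod n) = (c : ZMod n) := by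
    push_cast
    rw [ZMod.natCast_val, ZMod.cast_id]
    have hui : (i : ZMod n) = ↑u := (ZMod.coe_unitOfCoprime i hco).symm
    rw [hui, mul_assoc, Units.inv_mul, mul_one]
  exact (ZMod.natCast_eq_natCast_iff _ _ _).mp hcast

lemma le_aux (n i k : ℕ) (hn0 : 0 < n) (hgcd : Nat.gcd n i = 1) (hk : n - 1 ≤ k)
    (x r : ℕ) (hx : x < n) (hr : r < n)
    (hc : ∀ t ≤ k, (x + t*i)/n = (r + t*i)/n) : x ≤ r := by
  obtain ⟨s, hs, hsm⟩ := exists_mul_mod n i hn0 hgcd (n - 1 - r)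
  have hsm' : (s * i) % n = n - 1 - r := by
    rw [hsm]; exact Nat.mod_eq_of_lt (by omega)
  have h1 := hc s (by omega)
  have hm : (r + s*i) % n = n - 1 := by
    rw [Nat.add_mod, hsm', Nat.mod_eq_of_lt hr]
    have e : r + (n - 1 - r) = n - 1 := by omega
    rw [e, Nat.mod_eq_of_lt (by omega)]
  have d1 := Nat.div_add_mod (r + s*i) n
  have d2 := Nat.div_add_mod (x + s*i) n
  rw [h1] at d2
  have hlt : (x + s*i) % n < n := Nat.mod_lt _ hn0
  omega

lemma stdBasis_mem_wordSpan (n i : ℕ) (hi : 0 < i) (hin : i < n)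
    (hgcd : Nat.gcd n i = 1) (r c : Fin n) :
    Matrix.single r c (1:ℂ) ∈
      wordSpan n (2 * n - 2) {jordan n ^ i, (jordan n)ᵀ ^ (n - i)} := by
  have hn0 : 0 < n := by omega
  obtain ⟨s, hs, hsm⟩ :=
    exists_mul_mod n i hn0 hgcd ((c:ℕ) + n - ((r:ℕ) + (n-1)*i) % n)
  set k := n - 1 + s with hkdef
  have hk1 : n - 1 ≤ k := by omega
  have hk2 : k ≤ 2 * n - 2 := by omega
  have he : ((r:ℕ) + (n-1)*i) % n < n := Nat.mod_lt _ hn0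
  have hkc : ((r:ℕ) + k*i) % n = (c:ℕ) := by
    have e0 : (r:ℕ) + k*i = ((r:ℕ) + (n-1)*i) + s*i := by
      rw [hkdef, Nat.add_mul]; omega
    have h2 : (((r:ℕ) + (n-1)*i) % n + ((c:ℕ)+n-((r:ℕ) + (n-1)*i) % n)) % n
        = (((r:ℕ) + (n-1)*i) % n % n + ((c:ℕ)+n-((r:ℕ) + (n-1)*i) % n) % n) % n :=
      Nat.add_mod _ _ _
    rw [Nat.mod_mod_of_dvd _ dvd_rfl] at h2
    calc ((r:ℕ) + k*i) % n
        = (((r:ℕ) + (n-1)*i) % n + (s*i) % n) % n := by rw [e0]; exact Nat.add_mod _ _ _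
      _ = (((r:ℕ) + (n-1)*i) % n + ((c:ℕ)+n-((r:ℕ) + (n-1)*i) % n) % n) % n := by rw [hsm]
      _ = (((r:ℕ) + (n-1)*i) % n + ((c:ℕ)+n-((r:ℕ) + (n-1)*i) % n)) % n := h2.symm
      _ = ((c:ℕ) + n) % n := by congr 1; omega
      _ = (c:ℕ) := by rw [Nat.add_mod_right]; exact Nat.mod_eq_of_lt c.isLt
  have hprod : (wordList n i k (r:ℕ)).prod = Matrix.single r c 1 := by
    ext x y
    rw [prod_wordList n i hi hin k r r.isLt x y]
    have hsb : Matrix.single r c (1:ℂ) x y = if r = x ∧ c = y then 1 else 0 := rfl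
    rw [hsb]
    congr 1
    simp only [eq_iff_iff]
    constructor
    · rintro ⟨hcnd, hy⟩
      have hxr : (x:ℕ) = (r:ℕ) :=
        le_antisymm (le_aux n i k hn0 hgcd hk1 x r x.isLt r.isLt hcnd)
          (le_aux n i k hn0 hgcd hk1 r x r.isLt x.isLt (fun t ht => (hcnd t ht).symm))
      refine ⟨Fin.ext hxr.symm, Fin.ext ?_⟩
      rw [hy, hxr, hkc]
    · rintro ⟨h1, h2⟩
      subst h1
      refine ⟨fun t ht => rfl, ?_⟩
      rw [hkc]
      exact congrArg Fin.val h2.symm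
  exact Submodule.subset_span
    ⟨wordList n i k r, by rw [wordList_length]; omega, wordList_mem n i k r, hprod.symm⟩

/-- For `0 < i < n` with `gcd(n, i) = 1`, the span of words of length at most `2n - 2`
in `{J_n^i, (J_nᵀ)^{n-i}}` is all of `M_n(ℂ)`. -/
theorem stmt_16 (n i : ℕ) (hi : 0 < i) (hin : i < n) (hgcd : Nat.gcd n i = 1) :
    wordSpan n (2 * n - 2) {jordan n ^ i, (jordan n)ᵀ ^ (n - i)} = ⊤ := by
  apply le_antisymm le_top
  intro M _
  have hmem : (∑ r : Fin n, ∑ c : Fin n, Matrix.single r c (M r c)) ∈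
      wordSpan n (2 * n - 2) {jordan n ^ i, (jordan n)ᵀ ^ (n - i)} := by
    refine Submodule.sum_mem _ fun r _ => Submodule.sum_mem _ fun c _ => ?_
    have h : Matrix.single r c (M r c) = (M r c) • Matrix.single r c (1:ℂ) := by
      rw [smul_single, smul_eq_mul, mul_one]
    rw [h]
    exact Submodule.smul_mem _ _ (stdBasis_mem_wordSpan n i hi hin hgcd r c)
  rw [← matrix_eq_sum_single M] at hmem
  exact hmem
end
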